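/- Let μ_1, …, μ_n be matchings of a fixed assignment game, each endowed with its half price vector p^half_k, and let w_1, …, w_n ≥ 0 be weights summing to 1. Define the average utilities ū_i = Σ_k w_k·u_i(μ_k, p^half_k) and v̄_j = Σ_k w_k·v_j(μ_k, p^half_k), and the average subset instability SI^avg := max over subsets B' ⊆ B, S' ⊆ S and matchings μ' between B' and S' of SW(μ') − (Σ_{i∈B'} ū_i + Σ_{j∈S'} v̄_j). Then SI^avg ≤ OPT − (1/2)·Σ_k w_k·SW(μ_k); equivalently, when OPT > 0, (1/2)·Σ_k w_k·λ(μ_k) ≤ 1 − SI^avg/OPT. -/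

import Mathlib

open Finset

/-- A matching: a partial, injective assignment of buyers to sellers. -/
structure Matching (B S : Type*) where
  toFun : B → Option S
  inj : ∀ i i' j, toFun i = some j → toFun i' = some j → i = i'

variable {B S : Type*} [Fintype B] [Fintype S]

/-- Generated utility of a pair: `a i j = h i j - c j`. -/
def gain (h : B → S → ℝ) (c : S → ℝ) (i : B) (j : S) : ℝ := h i j - c j

/-- Social welfare of a matching. -/
def SW (h : B → S → ℝ) (c : S → ℝ) (μ : Matching B S) : ℝ :=
  ∑ i : B, ((μ.toFun i).elim 0 (fun j => gain h c i j))

/-- Buyer utility under an allocation. -/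
def buyerU (h : B → S → ℝ) (μ : Matching B S) (p : S → ℝ) (i : B) : ℝ :=
  (μ.toFun i).elim 0 (fun j => h i j - p j)

/-- Seller utility under an allocation. -/
def sellerU (c : S → ℝ) (p : S → ℝ) (j : S) : ℝ := p j - c j

/-- A seller is matched under `μ`. -/
def SellerMatched (μ : Matching B S) (j : S) : Prop := ∃ i, μ.toFun i = some j

/-- A valid price vector: nonnegative, and equal to the seller's valuation on
unmatched sellers. -/
def ValidPrices (c : S → ℝ) (μ : Matching B S) (p : S → ℝ) : Prop :=
  (∀ j, 0 ≤ p j) ∧ (∀ j, ¬ SellerMatched μ j → p j = c j)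

/-- Individual rationality of an allocation. -/
def IndivRational (h : B → S → ℝ) (c : S → ℝ) (μ : Matching B S) (p : S → ℝ) : Prop :=
  (∀ i, 0 ≤ buyerU h μ p i) ∧ (∀ j, 0 ≤ sellerU c p j)

/-- Stability of an allocation. -/
def Stable (h : B → S → ℝ) (c : S → ℝ) (μ : Matching B S) (p : S → ℝ) : Prop :=
  IndivRational h c μ p ∧ ∀ i j, gain h c i j ≤ buyerU h μ p i + sellerU c p j

/-- The optimal (maximum) social welfare over all matchings. -/
noncomputable def OPT (h : B → S → ℝ) (c : S → ℝ) : ℝ :=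
  sSup (Set.range (SW h c))

/-- `μ'` is a matching within the sub-market `(B', S')`. -/
def Within (B' : Finset B) (S' : Finset S) (μ' : Matching B S) : Prop :=
  ∀ i j, μ'.toFun i = some j → i ∈ B' ∧ j ∈ S'

/-- Subset instability of a pair of utility vectors `(u, v)`. -/
noncomputable def SIgen (h : B → S → ℝ) (c : S → ℝ) (u : B → ℝ) (v : S → ℝ) : ℝ :=
  sSup {x | ∃ (B' : Finset B) (S' : Finset S) (μ' : Matching B S),
    Within B' S' μ' ∧ x = SW h c μ' - ((∑ i ∈ B', u i) + (∑ j ∈ S', v j))}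

/-- Subset instability of an allocation. -/
noncomputable def SI (h : B → S → ℝ) (c : S → ℝ) (μ : Matching B S) (p : S → ℝ) : ℝ :=
  SIgen h c (buyerU h μ p) (sellerU c p)

open Classical in
/-- The half price vector: `c j + a i j / 2` for a seller `j` matched to `i`, and `c j`
for unmatched sellers. -/
noncomputable def halfPrice (h : B → S → ℝ) (c : S → ℝ) (μ : Matching B S) (j : S) : ℝ :=
  if hj : SellerMatched μ j then c j + gain h c hj.choose j / 2 else c j

section Aux

variable (h : B → S → ℝ) (c : S → ℝ)

lemma halfPrice_eq_of_matched (μ : Matching B S) {i : B} {j : S}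
    (hij : μ.toFun i = some j) :
    halfPrice h c μ j = c j + gain h c i j / 2 := by
  have hm : SellerMatched μ j := ⟨i, hij⟩
  rw [halfPrice, dif_pos hm]
  have hs := hm.choose_spec
  have : hm.choose = i := μ.inj _ _ _ hs hij
  rw [this]

lemma halfPrice_eq_of_unmatched (μ : Matching B S) {j : S}
    (hj : ¬ SellerMatched μ j) : halfPrice h c μ j = c j := by
  rw [halfPrice, dif_neg hj]

lemma buyerU_half (μ : Matching B S) (i : B) :
    buyerU h μ (halfPrice h c μ) i
      = (μ.toFun i).elim 0 (fun j => gain h c i j / 2) := by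
  unfold buyerU
  cases hmi : μ.toFun i with
  | none => simp
  | some j =>
    simp only [Option.elim]
    rw [halfPrice_eq_of_matched h c μ hmi]
    unfold gain; ring

lemma sellerU_half_matched (μ : Matching B S) {i : B} {j : S}
    (hij : μ.toFun i = some j) :
    sellerU c (halfPrice h c μ) j = gain h c i j / 2 := by
  unfold sellerU
  rw [halfPrice_eq_of_matched h c μ hij]; ring

lemma sellerU_half_unmatched (μ : Matching B S) {j : S}
    (hj : ¬ SellerMatched μ j) :
    sellerU c (halfPrice h c μ) j = 0 := by
  unfold sellerU
  rw [halfPrice_eq_of_unmatched h c μ hj]; ring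

lemma buyerU_half_nonneg (ha : ∀ i j, 0 ≤ gain h c i j) (μ : Matching B S) (i : B) :
    0 ≤ buyerU h μ (halfPrice h c μ) i := by
  rw [buyerU_half]
  cases μ.toFun i with
  | none => simp
  | some j => simpa using div_nonneg (ha i j) (by norm_num)

lemma sellerU_half_nonneg (ha : ∀ i j, 0 ≤ gain h c i j) (μ : Matching B S) (j : S) :
    0 ≤ sellerU c (halfPrice h c μ) j := by
  by_cases hj : SellerMatched μ j
  · obtain ⟨i, hij⟩ := hj
    rw [sellerU_half_matched h c μ hij]
    exact div_nonneg (ha i j) (by norm_num)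
  · rw [sellerU_half_unmatched h c μ hj]

open Classical in
/-- Reindex the sum of seller half-utilities over `S'` as a sum over buyers. -/
lemma sum_sellerU_half (μ : Matching B S) (S' : Finset S) :
    ∑ j ∈ S', sellerU c (halfPrice h c μ) j
      = ∑ i : B, (μ.toFun i).elim 0
          (fun j => if j ∈ S' then gain h c i j / 2 else 0) := by
  classical
  have step1 : ∀ j ∈ S', sellerU c (halfPrice h c μ) j
      = ∑ i : B, (if μ.toFun i = some j then gain h c i j / 2 else 0) := by
    intro j _
    by_cases hj : SellerMatched μ j
    · obtain ⟨i0, hi0⟩ := hj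
      rw [sellerU_half_matched h c μ hi0]
      rw [Finset.sum_eq_single i0]
      · rw [if_pos hi0]
      · intro i _ hne
        rw [if_neg]
        intro hcontra
        exact hne (μ.inj _ _ _ hcontra hi0)
      · intro hcontra; exact absurd (Finset.mem_univ i0) hcontra
    · rw [sellerU_half_unmatched h c μ hj]
      symm
      apply Finset.sum_eq_zero
      intro i _
      rw [if_neg]
      intro hcontra; exact hj ⟨i, hcontra⟩
  rw [Finset.sum_congr rfl step1, Finset.sum_comm]
  apply Finset.sum_congr rfl
  intro i _
  cases hmi : μ.toFun i with
  | none =>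
    simp
  | some j0 =>
    simp only [Option.elim]
    by_cases hj0 : j0 ∈ S'
    · rw [if_pos hj0]
      rw [Finset.sum_eq_single j0]
      · simp
      · intro j _ hne
        rw [if_neg (fun hc => hne (Option.some_inj.mp hc).symm)]
      · intro hcontra; exact absurd hj0 hcontra
    · rw [if_neg hj0]
      apply Finset.sum_eq_zero
      intro j hj
      rw [if_neg]
      intro hc
      exact hj0 (by rw [Option.some_inj.mp hc]; exact hj)

/-- The empty matching. -/
def emptyMatching : Matching B S :=
  ⟨fun _ => none, by intro i i' j hi _; simp at hi⟩

lemma SW_empty : SW h c (emptyMatching (B := B) (S := S)) = 0 := by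
  unfold SW emptyMatching; simp

lemma SW_nonneg (ha : ∀ i j, 0 ≤ gain h c i j) (μ : Matching B S) : 0 ≤ SW h c μ := by
  unfold SW
  apply Finset.sum_nonneg
  intro i _
  cases μ.toFun i with
  | none => exact le_refl _
  | some j => simpa using ha i j

lemma SW_le_of_gain_nonneg (ha : ∀ i j, 0 ≤ gain h c i j) (μ : Matching B S) :
    SW h c μ ≤ ∑ i : B, ∑ j : S, gain h c i j := by
  unfold SW
  apply Finset.sum_le_sum
  intro i _
  cases hmi : μ.toFun i with
  | none =>
    simp only [Option.elim]
    exact Finset.sum_nonneg fun j _ => ha i j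
  | some j =>
    simp only [Option.elim]
    exact Finset.single_le_sum (fun j' _ => ha i j') (Finset.mem_univ j)

lemma SW_le_OPT (ha : ∀ i j, 0 ≤ gain h c i j) (μ : Matching B S) :
    SW h c μ ≤ OPT h c := by
  apply le_csSup
  · exact ⟨∑ i : B, ∑ j : S, gain h c i j, by
      rintro x ⟨μ', rfl⟩; exact SW_le_of_gain_nonneg h c ha μ'⟩
  · exact ⟨μ, rfl⟩

open Classical in
/-- Combine `μ'` with the pairs of `μ` whose both endpoints are untouched by `μ'`. -/
noncomputable def combine (μ μ' : Matching B S) : Matching B S where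
  toFun i := (μ'.toFun i).elim
    ((μ.toFun i).bind (fun j => if ∀ i', μ'.toFun i' ≠ some j then some j else none))
    some
  inj := by
    intro i i' j hi hi'
    have spec : ∀ i₀ : B, ((μ'.toFun i₀).elim
        ((μ.toFun i₀).bind (fun j₀ => if ∀ i'', μ'.toFun i'' ≠ some j₀ then some j₀ else none))
        some) = some j →
        μ'.toFun i₀ = some j ∨
          (μ.toFun i₀ = some j ∧ ∀ i'', μ'.toFun i'' ≠ some j) := by
      intro i₀ hi₀
      cases hm' : μ'.toFun i₀ with
      | some j' => left; rw [hm'] at hi₀; simpa using hi₀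
      | none =>
        right
        rw [hm'] at hi₀
        simp only [Option.elim] at hi₀
        cases hm : μ.toFun i₀ with
        | none => rw [hm] at hi₀; simp at hi₀
        | some j' =>
          rw [hm, Option.bind_some] at hi₀
          split_ifs at hi₀ with hfree
          · obtain rfl : j' = j := by simpa using hi₀
            exact ⟨rfl, hfree⟩
    rcases spec i hi with h1 | ⟨h1, hfree1⟩ <;> rcases spec i' hi' with h2 | ⟨h2, hfree2⟩
    · exact μ'.inj _ _ _ h1 h2
    · exact absurd h1 (hfree2 i)
    · exact absurd h2 (hfree1 i')
    · exact μ.inj _ _ _ h1 h2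

open Classical in
lemma combine_toFun (μ μ' : Matching B S) (i : B) :
    (combine μ μ').toFun i = (μ'.toFun i).elim
      ((μ.toFun i).bind (fun j => if ∀ i', μ'.toFun i' ≠ some j then some j else none))
      some := rfl

open Classical in
/-- Pointwise inequality over buyers. -/
lemma pointwise_bound (ha : ∀ i j, 0 ≤ gain h c i j) (μ : Matching B S)
    (B' : Finset B) (S' : Finset S) (μ' : Matching B S) (hW : Within B' S' μ') (i : B) :
    (μ'.toFun i).elim 0 (gain h c i) + ((μ.toFun i).elim 0 (gain h c i)) / 2
      ≤ ((combine μ μ').toFun i).elim 0 (gain h c i)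
        + ((if i ∈ B' then buyerU h μ (halfPrice h c μ) i else 0)
          + (μ.toFun i).elim 0 (fun j => if j ∈ S' then gain h c i j / 2 else 0)) := by
  have hui_nonneg : 0 ≤ (if i ∈ B' then buyerU h μ (halfPrice h c μ) i else 0) := by
    split_ifs
    · exact buyerU_half_nonneg h c ha μ i
    · exact le_refl 0
  cases hmi : μ.toFun i with
  | none =>
    cases hmi' : μ'.toFun i with
    | none =>
      have hstar : (combine μ μ').toFun i = none := by
        rw [combine_toFun, hmi', Option.elim_none, hmi]; rfl
      rw [hstar]
      simp only [Option.elim_none]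
      linarith
    | some j' =>
      have hstar : (combine μ μ').toFun i = some j' := by
        rw [combine_toFun, hmi', Option.elim_some]
      rw [hstar]
      simp only [Option.elim_none, Option.elim_some]
      linarith
  | some j0 =>
    have hu_val : buyerU h μ (halfPrice h c μ) i = gain h c i j0 / 2 := by
      rw [buyerU_half, hmi]; simp
    have hV : 0 ≤ (if j0 ∈ S' then gain h c i j0 / 2 else 0) := by
      split_ifs
      · exact div_nonneg (ha i j0) (by norm_num)
      · exact le_refl 0
    cases hmi' : μ'.toFun i with
    | some j1 =>
      have hiB' : i ∈ B' := (hW i j1 hmi').1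
      have hstar : (combine μ μ').toFun i = some j1 := by
        rw [combine_toFun, hmi', Option.elim_some]
      rw [hstar, if_pos hiB', hu_val]
      simp only [Option.elim_some]
      linarith
    | none =>
      by_cases hfree : ∀ i', μ'.toFun i' ≠ some j0
      · have hstar : (combine μ μ').toFun i = some j0 := by
          rw [combine_toFun, hmi', Option.elim_none, hmi, Option.bind_some, if_pos hfree]
        rw [hstar]
        simp only [Option.elim_none, Option.elim_some]
        linarith [ha i j0]
      · have hstar : (combine μ μ').toFun i = none := by
          rw [combine_toFun, hmi', Option.elim_none, hmi, Option.bind_some, if_neg hfree]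
        push_neg at hfree
        obtain ⟨i', hi'⟩ := hfree
        have hjS' : j0 ∈ S' := (hW i' j0 hi').2
        rw [hstar]
        simp only [Option.elim_none, Option.elim_some]
        rw [if_pos hjS']
        linarith

open Classical in
/-- The key per-matching bound. -/
lemma core_bound (ha : ∀ i j, 0 ≤ gain h c i j) (μ : Matching B S)
    (B' : Finset B) (S' : Finset S) (μ' : Matching B S) (hW : Within B' S' μ') :
    SW h c μ' - ((∑ i ∈ B', buyerU h μ (halfPrice h c μ) i)
        + ∑ j ∈ S', sellerU c (halfPrice h c μ) j)
      ≤ OPT h c - SW h c μ / 2 := by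
  have hB' : ∑ i : B, (if i ∈ B' then buyerU h μ (halfPrice h c μ) i else 0)
      = ∑ i ∈ B', buyerU h μ (halfPrice h c μ) i := by
    rw [← Finset.sum_filter]
    congr 1
    ext x
    simp
  have key : SW h c μ' + SW h c μ / 2
      ≤ SW h c (combine μ μ') + ((∑ i ∈ B', buyerU h μ (halfPrice h c μ) i)
        + ∑ j ∈ S', sellerU c (halfPrice h c μ) j) := by
    rw [← hB', sum_sellerU_half h c μ S']
    unfold SW
    rw [Finset.sum_div, ← Finset.sum_add_distrib, ← Finset.sum_add_distrib,
      ← Finset.sum_add_distrib]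
    exact Finset.sum_le_sum fun i _ => pointwise_bound h c ha μ B' S' μ' hW i
  have hopt := SW_le_OPT h c ha (combine μ μ')
  linarith

end Aux

/-- Average stability guarantee of half prices: the subset instability of the
averaged half-price utilities is at most `OPT - (1/2)·(average social welfare)`;
equivalently, half the averaged optimality ratio lower-bounds the average
stability index. -/
theorem avg_half_price_guarantee
    {B S : Type*} [Fintype B] [Fintype S]
    (h : B → S → ℝ) (c : S → ℝ)
    (hh : ∀ i j, 0 ≤ h i j) (hc : ∀ j, 0 ≤ c j)
    (ha : ∀ i j, 0 ≤ gain h c i j)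
    (n : ℕ) (μs : Fin n → Matching B S)
    (w : Fin n → ℝ) (hw : ∀ k, 0 ≤ w k) (hw1 : ∑ k, w k = 1) :
    SIgen h c (fun i => ∑ k, w k * buyerU h (μs k) (halfPrice h c (μs k)) i)
        (fun j => ∑ k, w k * sellerU c (halfPrice h c (μs k)) j)
      ≤ OPT h c - (1 / 2) * ∑ k, w k * SW h c (μs k) ∧
    (0 < OPT h c →
      (1 / 2) * ∑ k, w k * (SW h c (μs k) / OPT h c)
        ≤ 1 - (SIgen h c (fun i => ∑ k, w k * buyerU h (μs k) (halfPrice h c (μs k)) i)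
            (fun j => ∑ k, w k * sellerU c (halfPrice h c (μs k)) j)) / OPT h c) := by
  classical
  have hOPT0 : 0 ≤ OPT h c := by
    have h0 := SW_le_OPT h c ha (emptyMatching (B := B) (S := S))
    rwa [SW_empty] at h0
  have hT0 : 0 ≤ ∑ k, w k * SW h c (μs k) :=
    Finset.sum_nonneg fun k _ => mul_nonneg (hw k) (SW_nonneg h c ha (μs k))
  have hTle : ∑ k, w k * SW h c (μs k) ≤ OPT h c := by
    have h1 : ∑ k, w k * SW h c (μs k) ≤ ∑ k, w k * OPT h c :=
      Finset.sum_le_sum fun k _ =>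
        mul_le_mul_of_nonneg_left (SW_le_OPT h c ha (μs k)) (hw k)
    rwa [← Finset.sum_mul, hw1, one_mul] at h1
  have hbound : SIgen h c (fun i => ∑ k, w k * buyerU h (μs k) (halfPrice h c (μs k)) i)
      (fun j => ∑ k, w k * sellerU c (halfPrice h c (μs k)) j)
      ≤ OPT h c - (1 / 2) * ∑ k, w k * SW h c (μs k) := by
    apply Real.sSup_le
    · rintro x ⟨B', S', μ', hW, rfl⟩
      have hsum1 : ∑ i ∈ B', (∑ k, w k * buyerU h (μs k) (halfPrice h c (μs k)) i)
          = ∑ k, w k * ∑ i ∈ B', buyerU h (μs k) (halfPrice h c (μs k)) i := by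
        rw [Finset.sum_comm]
        exact Finset.sum_congr rfl fun k _ => (Finset.mul_sum _ _ _).symm
      have hsum2 : ∑ j ∈ S', (∑ k, w k * sellerU c (halfPrice h c (μs k)) j)
          = ∑ k, w k * ∑ j ∈ S', sellerU c (halfPrice h c (μs k)) j := by
        rw [Finset.sum_comm]
        exact Finset.sum_congr rfl fun k _ => (Finset.mul_sum _ _ _).symm
      have hsplit : ∑ k, (w k * SW h c μ'
            - (w k * ∑ i ∈ B', buyerU h (μs k) (halfPrice h c (μs k)) i
              + w k * ∑ j ∈ S', sellerU c (halfPrice h c (μs k)) j))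
          = SW h c μ' - (∑ k, w k * ∑ i ∈ B', buyerU h (μs k) (halfPrice h c (μs k)) i
              + ∑ k, w k * ∑ j ∈ S', sellerU c (halfPrice h c (μs k)) j) := by
        rw [Finset.sum_sub_distrib, Finset.sum_add_distrib, ← Finset.sum_mul, hw1, one_mul]
      rw [hsum1, hsum2, ← hsplit]
      have hstep : ∑ k, (w k * SW h c μ'
            - (w k * ∑ i ∈ B', buyerU h (μs k) (halfPrice h c (μs k)) i
              + w k * ∑ j ∈ S', sellerU c (halfPrice h c (μs k)) j))
          ≤ ∑ k, w k * (OPT h c - SW h c (μs k) / 2) := by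
        apply Finset.sum_le_sum
        intro k _
        have hcore := core_bound h c ha (μs k) B' S' μ' hW
        have heq : w k * SW h c μ'
            - (w k * ∑ i ∈ B', buyerU h (μs k) (halfPrice h c (μs k)) i
              + w k * ∑ j ∈ S', sellerU c (halfPrice h c (μs k)) j)
            = w k * (SW h c μ' - ((∑ i ∈ B', buyerU h (μs k) (halfPrice h c (μs k)) i)
              + ∑ j ∈ S', sellerU c (halfPrice h c (μs k)) j)) := by ring
        rw [heq]
        exact mul_le_mul_of_nonneg_left hcore (hw k)
      have hfinal : ∑ k, w k * (OPT h c - SW h c (μs k) / 2)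
          = OPT h c - (1 / 2) * ∑ k, w k * SW h c (μs k) := by
        have hcongr : ∀ k ∈ Finset.univ, w k * (OPT h c - SW h c (μs k) / 2)
            = w k * OPT h c - (1 / 2) * (w k * SW h c (μs k)) := fun k _ => by ring
        rw [Finset.sum_congr rfl hcongr, Finset.sum_sub_distrib, ← Finset.sum_mul, hw1,
          one_mul, ← Finset.mul_sum]
      linarith
    · linarith
  refine ⟨hbound, fun hO => ?_⟩
  have hdiv : ∑ k, w k * (SW h c (μs k) / OPT h c)
      = (∑ k, w k * SW h c (μs k)) / OPT h c := by
    have hcongr : ∀ k ∈ Finset.univ, w k * (SW h c (μs k) / OPT h c)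
        = (w k * SW h c (μs k)) / OPT h c := fun k _ => by ring
    rw [Finset.sum_congr rfl hcongr, ← Finset.sum_div]
  rw [hdiv]
  have h4 : SIgen h c (fun i => ∑ k, w k * buyerU h (μs k) (halfPrice h c (μs k)) i)
      (fun j => ∑ k, w k * sellerU c (halfPrice h c (μs k)) j) / OPT h c
      ≤ (OPT h c - (1 / 2) * ∑ k, w k * SW h c (μs k)) / OPT h c :=
    (div_le_div_iff_of_pos_right hO).mpr hbound
  have h5 : (OPT h c - (1 / 2) * ∑ k, w k * SW h c (μs k)) / OPT h c
      = 1 - (1 / 2) * ((∑ k, w k * SW h c (μs k)) / OPT h c) := by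
    field_simp
  linarith
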